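/- arXiv:0805.3339 — 4 statements merged into one kernel-verified Lean document; each statement's English description precedes it below -/
import Mathlib

section
/- For any list of elements of a linearly ordered type, sorting the list minimizes the number of adjacent unequal pairs: after sorting, the number of indices i with l[i] ≠ l[i+1] equals (number of distinct values in the list) − 1, and this is the minimum over all permutations of the list. -/
/-- Number of adjacent unequal pairs in a list. -/
def transitions {α : Type*} [DecidableEq α] (l : List α) : ℕ :=
  ((l.zip l.tail).filter (fun p => p.1 ≠ p.2)).length

lemma transitions_cons_cons {α : Type*} [DecidableEq α] (a b : α) (t : List α) :
    transitions (a :: b :: t) = (if a = b then 0 else 1) + transitions (b :: t) := by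
  simp only [transitions, List.tail_cons, List.zip_cons_cons, List.filter]
  by_cases h : a = b <;> simp [h, List.zip] <;> omega

lemma card_le_transitions {α : Type*} [DecidableEq α] :
    ∀ m : List α, m.toFinset.card ≤ transitions m + 1
  | [] => by simp [transitions]
  | [a] => by simp [transitions]
  | a :: b :: t => by
    have ih := card_le_transitions (b :: t)
    rw [transitions_cons_cons]
    by_cases h : a = b
    · subst h
      have : (a :: a :: t).toFinset = (a :: t).toFinset := by simp
      rw [this]; simpa using ih
    · have hc : (a :: b :: t).toFinset.card ≤ (b :: t).toFinset.card + 1 := by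
        rw [List.toFinset_cons]; exact Finset.card_insert_le _ _
      simp only [h, if_false]; omega

lemma sorted_transitions {α : Type*} [LinearOrder α] :
    ∀ m : List α, m ≠ [] → m.Pairwise (· ≤ ·) → transitions m + 1 = m.toFinset.card
  | [], h, _ => absurd rfl h
  | [a], _, _ => by simp [transitions]
  | a :: b :: t, _, hs => by
    obtain ⟨hhead, hs'⟩ := List.pairwise_cons.mp hs
    obtain ⟨hhead', _⟩ := List.pairwise_cons.mp hs'
    have ih := sorted_transitions (b :: t) (by simp) hs'
    rw [transitions_cons_cons]
    by_cases h : a = b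
    · subst h
      have : (a :: a :: t).toFinset = (a :: t).toFinset := by simp
      rw [this]; simpa using ih
    · have hab : a < b := lt_of_le_of_ne (hhead b (by simp)) h
      have hnot : a ∉ (b :: t).toFinset := by
        simp only [List.mem_toFinset, List.mem_cons]
        rintro (rfl | hm)
        · exact h rfl
        · exact absurd (lt_of_lt_of_le hab (hhead' a hm)) (lt_irrefl a)
      rw [List.toFinset_cons, Finset.card_insert_of_notMem hnot]
      simp only [h, if_false]; omega

theorem sorting_minimizes_transitions {α : Type*} [LinearOrder α] (l : List α) :
    transitions (l.insertionSort (· ≤ ·)) = l.dedup.length - 1 ∧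
    ∀ m : List α, l.Perm m → transitions (l.insertionSort (· ≤ ·)) ≤ transitions m := by
  have hperm : (l.insertionSort (· ≤ ·)).Perm l := l.perm_insertionSort (· ≤ ·)
  have hsorted : (l.insertionSort (· ≤ ·)).Pairwise (· ≤ ·) := l.pairwise_insertionSort (· ≤ ·)
  have htf : (l.insertionSort (· ≤ ·)).toFinset = l.toFinset := List.toFinset_eq_of_perm _ _ hperm
  rcases eq_or_ne l [] with rfl | hne
  · constructor
    · simp [transitions]
    · intro m hm
      simp [transitions]
  · have hne' : l.insertionSort (· ≤ ·) ≠ [] := by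
      intro h
      exact hne (List.Perm.nil_eq (h ▸ hperm)).symm
    have key := sorted_transitions _ hne' hsorted
    rw [htf, List.card_toFinset] at key
    constructor
    · omega
    · intro m hm
      have h1 : m.toFinset.card ≤ transitions m + 1 := card_le_transitions m
      have h2 : m.toFinset = l.toFinset := (List.toFinset_eq_of_perm _ _ hm).symm
      rw [h2, List.card_toFinset] at h1
      omega
end

section
/- The Gray-code comparison relation on binary vectors of a fixed length n, defined by: a <_G b if and only if there exists j such that a_i = b_i for all i < j, a_j ≠ b_j, and a_j equals the parity of the number of 1s among a_1,…,a_{j−1}, is a strict total order (irreflexive, transitive, and satisfying trichotomy). -/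
/-- Gray-code comparison on binary vectors of length `n`. -/
def grayLT (n : ℕ) (a b : Fin n → Bool) : Prop :=
  ∃ j : Fin n, (∀ i, i < j → a i = b i) ∧ a j ≠ b j ∧
    a j = decide ((Finset.univ.filter (fun i : Fin n => i < j ∧ a i = true)).card % 2 = 1)

lemma gray_parity_eq {n : ℕ} {a b : Fin n → Bool} {j : Fin n} (h : ∀ i, i < j → a i = b i) :
    (Finset.univ.filter (fun i : Fin n => i < j ∧ a i = true)) =
    (Finset.univ.filter (fun i : Fin n => i < j ∧ b i = true)) := by
  apply Finset.filter_congr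
  intro i _
  by_cases hi : i < j
  · simp [hi, h i hi]
  · simp [hi]

theorem grayLT_strict_total_order (n : ℕ) :
    IsStrictTotalOrder (Fin n → Bool) (grayLT n) := by
  refine { trichotomous := ?_, irrefl := ?_, trans := ?_ }
  · intro a b
    suffices H : grayLT n a b ∨ a = b ∨ grayLT n b a by
      intro h1 h2; rcases H with H | H | H <;> first | exact H | exact absurd H h1 | exact absurd H h2
    by_cases hab : a = b
    · exact Or.inr (Or.inl hab)
    · have hS : (Finset.univ.filter (fun i : Fin n => a i ≠ b i)).Nonempty := by
        rcases Function.ne_iff.mp hab with ⟨i, hi⟩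
        exact ⟨i, by simp [hi]⟩
      set j := (Finset.univ.filter (fun i : Fin n => a i ≠ b i)).min' hS with hj
      have hjmem : a j ≠ b j := by
        have := Finset.min'_mem _ hS
        simpa using this
      have hlt : ∀ i, i < j → a i = b i := by
        intro i hi
        by_contra hne
        have : j ≤ i := Finset.min'_le _ _ (by simp [hne])
        exact absurd hi (not_lt.mpr this)
      set p := decide ((Finset.univ.filter (fun i : Fin n => i < j ∧ a i = true)).card % 2 = 1) with hp
      by_cases haj : a j = p
      · exact Or.inl ⟨j, hlt, hjmem, haj⟩
      · refine Or.inr (Or.inr ⟨j, fun i hi => (hlt i hi).symm, fun h => hjmem h.symm, ?_⟩)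
        rw [← gray_parity_eq hlt, ← hp]
        revert haj hjmem; cases a j <;> cases b j <;> cases p <;> simp
  · intro a ⟨j, _, hne, _⟩
    exact hne rfl
  · rintro a b c ⟨j1, h1, hne1, hp1⟩ ⟨j2, h2, hne2, hp2⟩
    rcases lt_trichotomy j1 j2 with h | h | h
    · refine ⟨j1, fun i hi => (h1 i hi).trans (h2 i (hi.trans h)), ?_, hp1⟩
      rw [← h2 j1 h]; exact hne1
    · exfalso
      subst h
      rw [gray_parity_eq h1] at hp1
      have : b j1 = decide ((Finset.univ.filter (fun i : Fin n => i < j1 ∧ b i = true)).card % 2 = 1) := hp2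
      revert hne1; rw [hp1, this]; simp
    · refine ⟨j2, fun i hi => (h1 i (hi.trans h)).trans (h2 i hi), ?_, ?_⟩
      · rw [h1 j2 h]; exact hne2
      · rw [h1 j2 h, hp2, gray_parity_eq (fun i hi => h1 i (hi.trans h))]
end

section
/- For every N ≥ 1 and 0 ≤ k ≤ N there exists an enumeration of all C(N,k) k-element subsets of Fin N such that any two consecutive subsets differ by exchanging a single element (their symmetric difference has cardinality 2), i.e., a revolving-door Gray code for k-subsets exists. -/
open Finset

def gl : ℕ → ℕ → List (Finset ℕ)
  | _, 0 => [∅]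
  | 0, _+1 => []
  | n+1, k+1 => gl n (k+1) ++ ((gl n k).reverse.map (insert n))

lemma gl_length : ∀ n k, (gl n k).length = n.choose k
  | _, 0 => by simp [gl]
  | 0, _+1 => by simp [gl]
  | n+1, k+1 => by
    simp [gl, gl_length n (k+1), gl_length n k, Nat.choose_succ_succ, Nat.add_comm]

lemma gl_nil {n k : ℕ} (h : n < k) : gl n k = [] := by
  have := gl_length n k
  rw [Nat.choose_eq_zero_of_lt h] at this
  exact List.length_eq_zero_iff.mp this

lemma gl_mem : ∀ {n k : ℕ} {s : Finset ℕ}, s ∈ gl n k → s ⊆ Finset.range n ∧ s.card = k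
  | n, 0, s => by intro h; simp [gl] at h; subst h; simp
  | 0, k+1, s => by intro h; simp [gl] at h
  | n+1, k+1, s => by
    intro h
    simp only [gl, List.mem_append, List.mem_map, List.mem_reverse] at h
    rcases h with h | ⟨t, ht, rfl⟩
    · obtain ⟨h1, h2⟩ := gl_mem h
      exact ⟨h1.trans (Finset.range_subset_range.mpr (Nat.le_succ n)), h2⟩
    · obtain ⟨h1, h2⟩ := gl_mem ht
      have hn : n ∉ t := fun hn => by simpa using h1 hn
      constructor
      · intro x hx
        rcases Finset.mem_insert.mp hx with rfl | hx
        · simp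
        · exact Finset.range_subset_range.mpr (Nat.le_succ n) (h1 hx)
      · rw [Finset.card_insert_of_notMem hn, h2]

lemma mem_gl : ∀ {n k : ℕ} {s : Finset ℕ}, s ⊆ Finset.range n → s.card = k → s ∈ gl n k
  | n, 0, s => by
    intro _ hc
    rw [Finset.card_eq_zero] at hc; subst hc; simp [gl]
  | 0, k+1, s => by
    intro hs hc
    simp only [Finset.range_zero, Finset.subset_empty] at hs
    subst hs; simp at hc
  | n+1, k+1, s => by
    intro hs hc
    simp only [gl, List.mem_append, List.mem_map, List.mem_reverse]
    by_cases hn : n ∈ s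
    · right
      refine ⟨s.erase n, mem_gl ?_ ?_, ?_⟩
      · intro x hx
        have := hs (Finset.mem_of_mem_erase hx)
        simp only [Finset.mem_range] at this ⊢
        have := Finset.ne_of_mem_erase hx
        omega
      · rw [Finset.card_erase_of_mem hn, hc]; rfl
      · rw [Finset.insert_erase hn]
    · left
      refine mem_gl ?_ hc
      intro x hx
      have := hs hx
      simp only [Finset.mem_range] at this ⊢
      have : x ≠ n := fun h => hn (h ▸ hx)
      omega

def lastSet (n k : ℕ) : Finset ℕ :=
  match k with
  | 0 => ∅
  | k+1 => insert (n-1) (Finset.range k)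

lemma lastSet_self (n : ℕ) : insert n (lastSet n n) = Finset.range (n+1) := by
  cases n with
  | zero => simp [lastSet]
  | succ m =>
    ext x
    simp only [lastSet, Finset.mem_insert, Finset.mem_range]
    omega

lemma gl_hl : ∀ n, ∀ k, k ≤ n →
    (gl n k).head? = some (Finset.range k) ∧ (gl n k).getLast? = some (lastSet n k)
  | 0, 0 => fun _ => by simp [gl, lastSet]
  | 0, k+1 => fun h => by omega
  | n+1, 0 => fun _ => by simp [gl, lastSet]
  | n+1, k+1 => fun h => by
    have hk : k ≤ n := by omega
    obtain ⟨h1, h2⟩ := gl_hl n k hk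
    have hne : gl n k ≠ [] := fun e => by simp [e] at h1
    have hl2ne : ((gl n k).reverse.map (insert n)) ≠ [] := by simpa using hne
    constructor
    · by_cases hkn : k + 1 ≤ n
      · obtain ⟨g1, _⟩ := gl_hl n (k+1) hkn
        have hne1 : gl n (k+1) ≠ [] := fun e => by simp [e] at g1
        rw [gl, List.head?_append_of_ne_nil _ hne1, g1]
      · have : gl n (k+1) = [] := gl_nil (by omega)
        have hkn' : k = n := by omega
        subst hkn'
        rw [gl, this, List.nil_append, List.head?_map, List.head?_reverse, h2,
          Option.map_some]
        rw [lastSet_self]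
    · rw [gl, List.getLast?_append_of_ne_nil _ hl2ne, List.getLast?_map,
        List.getLast?_reverse, h1, Option.map_some]
      rfl

lemma chain'_mono_mem {α} {R S : α → α → Prop} {l : List α} (h : List.Chain' R l)
    (H : ∀ a ∈ l, ∀ b ∈ l, R a b → S a b) : List.Chain' S l := by
  unfold List.Chain' at h ⊢
  rw [List.isChain_iff_getElem] at h ⊢
  intro i hi
  exact H _ (List.getElem_mem _) _ (List.getElem_mem _) (h i hi)

lemma symmDiff_insert {n : ℕ} {s t : Finset ℕ} (hs : n ∉ s) (ht : n ∉ t) :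
    symmDiff (insert n s) (insert n t) = symmDiff s t := by
  ext x
  simp only [Finset.mem_symmDiff, Finset.mem_insert]
  constructor
  · rintro (⟨rfl | hx, h2⟩ | ⟨rfl | hx, h2⟩)
    · exact absurd (Or.inl rfl) h2
    · exact Or.inl ⟨hx, fun h => h2 (Or.inr h)⟩
    · exact absurd (Or.inl rfl) h2
    · exact Or.inr ⟨hx, fun h => h2 (Or.inr h)⟩
  · rintro (⟨hx, h2⟩ | ⟨hx, h2⟩)
    · exact Or.inl ⟨Or.inr hx, by rintro (rfl | h) <;> [exact hs hx; exact h2 h]⟩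
    · exact Or.inr ⟨Or.inr hx, by rintro (rfl | h) <;> [exact ht hx; exact h2 h]⟩

lemma glue_card {n k : ℕ} (h : k + 1 ≤ n) :
    (symmDiff (lastSet n (k+1)) (insert n (lastSet n k))).card = 2 := by
  cases k with
  | zero =>
    have : symmDiff (lastSet n 1) (insert n (lastSet n 0)) = {n-1, n} := by
      ext x
      simp only [lastSet, Finset.mem_symmDiff, Finset.mem_insert, Finset.mem_range,
        Finset.mem_singleton, Finset.notMem_empty, Nat.not_lt_zero, or_false]
      omega
    rw [this]
    rw [Finset.card_insert_of_notMem (by simp; omega), Finset.card_singleton]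
  | succ j =>
    have : symmDiff (lastSet n (j+2)) (insert n (lastSet n (j+1))) = {j, n} := by
      ext x
      simp only [lastSet, Finset.mem_symmDiff, Finset.mem_insert, Finset.mem_range,
        Finset.mem_singleton]
      omega
    rw [this]
    rw [Finset.card_insert_of_notMem (by simp; omega), Finset.card_singleton]

lemma gl_chain : ∀ n k, List.Chain' (fun s t => (symmDiff s t).card = 2) (gl n k)
  | _, 0 => by simp [gl, List.Chain', List.isChain_singleton]
  | 0, _+1 => by simp [gl, List.Chain', List.isChain_nil]
  | n+1, k+1 => by
    rw [gl]; unfold List.Chain'; rw [List.isChain_append]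
    refine ⟨gl_chain n (k+1), ?_, ?_⟩
    · rw [List.isChain_map, List.isChain_reverse]
      refine chain'_mono_mem (gl_chain n k) ?_
      intro a ha b hb hab
      have hna : n ∉ a := fun hn => by simpa using (gl_mem ha).1 hn
      have hnb : n ∉ b := fun hn => by simpa using (gl_mem hb).1 hn
      show (symmDiff (insert n b) (insert n a)).card = 2
      rw [symmDiff_insert hnb hna, symmDiff_comm]
      exact hab
    · intro x hx y hy
      by_cases hkn : k + 1 ≤ n
      · obtain ⟨_, g2⟩ := gl_hl n (k+1) hkn
        rw [g2] at hx
        obtain ⟨h1, h2⟩ := gl_hl n k (by omega)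
        rw [List.head?_map, List.head?_reverse, h2, Option.map_some] at hy
        simp only [Option.mem_def, Option.some.injEq] at hx hy
        subst hx; subst hy
        exact glue_card hkn
      · rw [gl_nil (by omega)] at hx
        simp at hx

theorem revolving_door_gray_code (N k : ℕ) (hN : 1 ≤ N) (hk : k ≤ N) :
    ∃ r : Fin (N.choose k) → {s : Finset (Fin N) // s.card = k},
      Function.Bijective r ∧
      ∀ i : Fin (N.choose k - 1),
        (symmDiff (r ⟨i.val, by omega⟩).val (r ⟨i.val + 1, by omega⟩).val).card = 2 := by
  classical
  have hlen : (gl N k).length = N.choose k := gl_length N k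
  have hget : ∀ i : ℕ, i < N.choose k → i < (gl N k).length := fun i h => by
    rw [hlen]; exact h
  have himg : ∀ (s : Finset ℕ) (h : ∀ m ∈ s, m < N), (s.attachFin h).image Fin.val = s := by
    intro s h
    ext a
    simp only [Finset.mem_image, Finset.mem_attachFin]
    constructor
    · rintro ⟨b, hb, rfl⟩; exact hb
    · intro ha; exact ⟨⟨a, h a ha⟩, ha, rfl⟩
  have hsd : ∀ (s t : Finset ℕ) (hs : ∀ m ∈ s, m < N) (ht : ∀ m ∈ t, m < N),
      (symmDiff (s.attachFin hs) (t.attachFin ht)).card = (symmDiff s t).card := by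
    intro s t hs ht
    rw [← Finset.card_image_of_injective _ Fin.val_injective,
      Finset.image_symmDiff _ _ Fin.val_injective, himg, himg]
  refine ⟨fun i => ⟨((gl N k).get ⟨i.val, hget i.val i.isLt⟩).attachFin
      (fun m hm => Finset.mem_range.mp ((gl_mem (List.get_mem _ _)).1 hm)),
      by rw [Finset.card_attachFin]; exact (gl_mem (List.get_mem _ _)).2⟩, ?_, ?_⟩
  · rw [Fintype.bijective_iff_surjective_and_card]
    constructor
    · rintro ⟨t, ht⟩
      have hsub : t.image Fin.val ⊆ Finset.range N := by
        intro x hx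
        simp only [Finset.mem_image] at hx
        obtain ⟨b, _, rfl⟩ := hx
        exact Finset.mem_range.mpr b.isLt
      have hcard : (t.image Fin.val).card = k := by
        rw [Finset.card_image_of_injective _ Fin.val_injective, ht]
      obtain ⟨i, hi⟩ := List.mem_iff_get.mp (mem_gl hsub hcard)
      refine ⟨⟨i.val, by rw [← hlen]; exact i.isLt⟩, ?_⟩
      apply Subtype.ext
      apply Finset.image_injective Fin.val_injective
      show Finset.image Fin.val (Finset.attachFin _ _) = _
      rw [himg]
      have e : ∀ h, (gl N k).get ⟨i.val, h⟩ = Finset.image Fin.val t := fun h => by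
        rw [show (⟨i.val, h⟩ : Fin (gl N k).length) = i from Fin.ext rfl, hi]
      exact e _
    · simp
  · intro i
    have hc := List.isChain_iff_getElem.mp (gl_chain N k) i.val (by rw [hlen]; have := i.isLt; omega)
    show (symmDiff (Finset.attachFin _ _) (Finset.attachFin _ _)).card = 2
    rw [hsd]
    exact hc
end

section
/- Gray-code order on binary vectors of length n is the pullback of the natural order on integers under Gray decoding: for vectors a and b representing numbers whose reflected Gray decodings are x and y respectively, a <_G b if and only if x < y. Equivalently, the map k ↦ bits of (k XOR k/2) from Fin(2^n) with its natural order to binary vectors with Gray-code order is an order isomorphism. -/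
/-- Bits (most significant first) of the Gray code of `k`. -/
def grayBits (n : ℕ) (k : Fin (2 ^ n)) : Fin n → Bool :=
  fun i => Nat.testBit (Nat.xor k.val (k.val / 2)) (n - 1 - i.val)

lemma graybit (k q : ℕ) : (k ^^^ k / 2).testBit q = ((k.testBit q) ^^ (k.testBit (q + 1))) := by
  rw [Nat.testBit_xor, Nat.testBit_div_two]

lemma testBit_high {k n q : ℕ} (hk : k < 2 ^ n) (hq : n ≤ q) : k.testBit q = false :=
  Nat.testBit_eq_false_of_lt (lt_of_lt_of_le hk (Nat.pow_le_pow_right (by norm_num) hq))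

/-- If the gray codes of `k, l < 2^n` agree on bits ≥ p, so do `k, l`. -/
lemma agree_of_gray_agree {k l n p : ℕ} (hk : k < 2 ^ n) (hl : l < 2 ^ n)
    (h : ∀ q, p ≤ q → (k ^^^ k / 2).testBit q = (l ^^^ l / 2).testBit q) :
    ∀ q, p ≤ q → k.testBit q = l.testBit q := by
  have key : ∀ m q, p ≤ q → n ≤ q + m → k.testBit q = l.testBit q := by
    intro m
    induction m with
    | zero =>
      intro q _ hq
      rw [testBit_high hk (by omega), testBit_high hl (by omega)]
    | succ m ih =>
      intro q hq hqm
      by_cases hc : n ≤ q + m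
      · exact ih q hq hc
      · have h1 : k.testBit (q + 1) = l.testBit (q + 1) := ih (q + 1) (by omega) (by omega)
        have h2 := h q hq
        rw [graybit, graybit, h1] at h2
        cases hkl : l.testBit (q + 1) <;> rw [hkl] at h2 <;> simpa using h2
  intro q hq
  exact key n q hq (by omega)

lemma parity_Ico {k n : ℕ} (hk : k < 2 ^ n) :
    ∀ m, m ≤ n →
    ((Finset.Ico (n - m) n).filter (fun q => (k ^^^ k / 2).testBit q = true)).card % 2
      = (k.testBit (n - m)).toNat := by
  intro m
  induction m with
  | zero => intro _; simp [testBit_high hk (le_refl n)]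
  | succ m ih =>
    intro hm
    have hrec := ih (by omega)
    have hins : Finset.Ico (n - (m + 1)) n
        = insert (n - (m + 1)) (Finset.Ico (n - (m + 1) + 1) n) := by
      ext a; simp only [Finset.mem_Ico, Finset.mem_insert]; omega
    have hstep : n - (m + 1) + 1 = n - m := by omega
    have hnot : n - (m + 1) ∉ Finset.Ico (n - m) n := by
      simp; omega
    rw [hins, hstep, Finset.filter_insert]
    have hbit : k.testBit (n - (m + 1))
        = ((k ^^^ k / 2).testBit (n - (m + 1)) ^^ k.testBit (n - m)) := by
      rw [graybit, hstep]
      cases k.testBit (n - (m + 1)) <;> cases k.testBit (n - m) <;> rfl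
    cases hg : (k ^^^ k / 2).testBit (n - (m + 1)) <;> rw [hg] at hbit <;>
      simp only [Bool.false_xor, Bool.true_xor] at hbit <;> rw [hbit]
    · simpa using hrec
    · rw [if_pos rfl, Finset.card_insert_of_notMem (fun hmem => hnot (Finset.mem_filter.mp hmem).1)]
      cases hb : k.testBit (n - m) <;> rw [hb] at hrec <;> simp at hrec ⊢ <;> omega

lemma card_fin_eq {n : ℕ} (x : Fin (2 ^ n)) (j : Fin n) :
    (Finset.univ.filter (fun i : Fin n => i < j ∧ grayBits n x i = true)).card
      = ((Finset.Ico (n - j.val) n).filter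
          (fun q => (x.val ^^^ x.val / 2).testBit q = true)).card := by
  have hn : 0 < n := j.pos
  apply Finset.card_nbij' (fun i => n - 1 - i.val) (fun q => ⟨n - 1 - q, by omega⟩)
  · intro i hi
    simp only [Finset.mem_coe, Finset.mem_filter, Finset.mem_univ, true_and, Fin.lt_def] at hi
    simp only [Finset.mem_coe, Finset.mem_filter, Finset.mem_Ico]
    refine ⟨⟨by omega, by omega⟩, ?_⟩
    exact hi.2
  · intro q hq
    simp only [Finset.mem_coe, Finset.mem_filter, Finset.mem_Ico] at hq
    simp only [Finset.mem_coe, Finset.mem_filter, Finset.mem_univ, true_and, Fin.lt_def]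
    constructor
    · show n - 1 - q < j.val; omega
    · show Nat.testBit _ (n - 1 - (n - 1 - q)) = true
      have : n - 1 - (n - 1 - q) = q := by omega
      rw [this]; exact hq.2
  · intro i hi
    simp only [Finset.mem_filter, Finset.mem_univ, true_and, Fin.lt_def] at hi
    ext
    show n - 1 - (n - 1 - i.val) = i.val
    have := i.isLt; omega
  · intro q hq
    simp only [Finset.mem_coe, Finset.mem_filter, Finset.mem_Ico] at hq
    show n - 1 - (n - 1 - q) = q; omega

lemma parity_iff {n : ℕ} (x : Fin (2 ^ n)) (j : Fin n) :
    ((Finset.univ.filter (fun i : Fin n => i < j ∧ grayBits n x i = true)).card % 2 = 1)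
      ↔ x.val.testBit (n - j.val) = true := by
  rw [card_fin_eq, parity_Ico x.isLt j.val (le_of_lt j.isLt)]
  cases h : x.val.testBit (n - j.val) <;> simp

theorem grayLT_pullback_of_lt (n : ℕ) (x y : Fin (2 ^ n)) :
    grayLT n (grayBits n x) (grayBits n y) ↔ x < y := by
  constructor
  · rintro ⟨j, hpre, hne, hsel⟩
    set p := n - 1 - j.val with hp
    have hjn : j.val < n := j.isLt
    have hnp : n - j.val = p + 1 := by omega
    -- selection condition gives x.testBit p = false
    have hdec : (decide ((Finset.univ.filter
        (fun i : Fin n => i < j ∧ grayBits n x i = true)).card % 2 = 1))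
        = x.val.testBit (p + 1) := by
      rw [← hnp]
      cases h : x.val.testBit (n - j.val)
      · simp [(parity_iff x j), h]
      · simp [(parity_iff x j), h]
    have haj : grayBits n x j = (x.val.testBit p ^^ x.val.testBit (p + 1)) := by
      show (Nat.xor x.val (x.val / 2)).testBit (n - 1 - j.val) = _
      exact graybit x.val p
    have hxp : x.val.testBit p = false := by
      have := hsel
      rw [haj, hdec] at this
      cases h : x.val.testBit p <;> rw [h] at this <;>
        cases h2 : x.val.testBit (p + 1) <;> rw [h2] at this <;> simp_all
    -- prefix agreement of gray bits above p
    have hgagree : ∀ q, p + 1 ≤ q →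
        (x.val ^^^ x.val / 2).testBit q = (y.val ^^^ y.val / 2).testBit q := by
      intro q hq
      rcases Nat.lt_or_ge q n with hqn | hqn
      · have := hpre ⟨n - 1 - q, by omega⟩ (by rw [Fin.lt_def]; show n - 1 - q < j.val; omega)
        have hq' : n - 1 - (n - 1 - q) = q := by omega
        simp only [grayBits, hq'] at this
        exact this
      · have hx2 : x.val / 2 < 2 ^ n := lt_of_le_of_lt (Nat.div_le_self _ _) x.isLt
        have hy2 : y.val / 2 < 2 ^ n := lt_of_le_of_lt (Nat.div_le_self _ _) y.isLt
        rw [Nat.testBit_xor, Nat.testBit_xor, testBit_high x.isLt hqn,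
          testBit_high y.isLt hqn, testBit_high hx2 hqn, testBit_high hy2 hqn]
    have hagree : ∀ q, p + 1 ≤ q → x.val.testBit q = y.val.testBit q :=
      agree_of_gray_agree x.isLt y.isLt hgagree
    -- x and y differ at bit p, with x bit false
    have hgne : (x.val ^^^ x.val / 2).testBit p ≠ (y.val ^^^ y.val / 2).testBit p := hne
    have hyp : y.val.testBit p = true := by
      rw [graybit, graybit, hagree (p + 1) (le_refl _)] at hgne
      cases h : y.val.testBit p
      · exfalso; apply hgne; rw [hxp, h]
      · rfl
    exact Nat.lt_of_testBit p hxp hyp (fun q hq => hagree q hq)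
  · intro hxy
    have hne : x.val ≠ y.val := Nat.ne_of_lt hxy
    have hd : x.val ^^^ y.val ≠ 0 := by
      intro h; apply hne; apply Nat.eq_of_testBit_eq; intro i
      have := congrArg (fun z => Nat.testBit z i) h
      cases h1 : x.val.testBit i <;> cases h2 : y.val.testBit i <;> simp_all [Nat.testBit_xor]
    obtain ⟨p, hp, hhigh⟩ := Nat.exists_most_significant_bit hd
    have hagree : ∀ q, p < q → x.val.testBit q = y.val.testBit q := by
      intro q hq
      have := hhigh q hq
      rw [Nat.testBit_xor] at this
      cases h1 : x.val.testBit q <;> cases h2 : y.val.testBit q <;> simp_all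
    have hdiff : x.val.testBit p ≠ y.val.testBit p := by
      rw [Nat.testBit_xor] at hp
      intro h; rw [h] at hp; simp at hp
    have hxy' : x.val < y.val := hxy
    have hxp : x.val.testBit p = false := by
      cases h1 : x.val.testBit p with
      | false => rfl
      | true =>
        exfalso
        have h2 : y.val.testBit p = false := by
          cases h2 : y.val.testBit p with
          | false => rfl
          | true => exact absurd rfl (h1 ▸ h2 ▸ hdiff)
        have : y.val < x.val :=
          Nat.lt_of_testBit p h2 h1 (fun q hq => (hagree q hq).symm)
        omega
    have hyp : y.val.testBit p = true := by
      cases h2 : y.val.testBit p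
      · rw [hxp, h2] at hdiff; simp at hdiff
      · rfl
    have hpn : p < n := by
      by_contra h
      rw [testBit_high y.isLt (by omega)] at hyp; simp at hyp
    refine ⟨⟨n - 1 - p, by omega⟩, ?_, ?_, ?_⟩
    · intro i hi
      rw [Fin.lt_def] at hi
      simp only at hi
      show (x.val ^^^ x.val / 2).testBit (n - 1 - i.val) = (y.val ^^^ y.val / 2).testBit _
      have hq : p < n - 1 - i.val := by omega
      rw [graybit, graybit, hagree _ hq, hagree _ (by omega)]
    · show (x.val ^^^ x.val / 2).testBit (n - 1 - (n - 1 - p)) ≠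
        (y.val ^^^ y.val / 2).testBit (n - 1 - (n - 1 - p))
      have hq : n - 1 - (n - 1 - p) = p := by omega
      rw [hq, graybit, graybit, hagree (p + 1) (by omega), hxp, hyp]
      simp
    · have hq : n - 1 - (n - 1 - p) = p := by omega
      have hnj : n - (n - 1 - p) = p + 1 := by omega
      show (x.val ^^^ x.val / 2).testBit (n - 1 - (n - 1 - p)) = _
      rw [hq, graybit, hxp, Bool.false_xor]
      have := parity_iff x ⟨n - 1 - p, by omega⟩
      simp only [hnj] at this
      cases h : x.val.testBit (p + 1)
      · simp [this, h]
      · simp [this, h]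
end
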